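/- For every odd integer k ≥ 3, the 4×4 complex matrix V_k is unitary, i.e., V_k·V_k† = V_k†·V_k = I. -/

import Mathlib

open Matrix

/-- The 4×4 complex matrix `V_k` from the paper, with `R_k = cos(π/k)`, `I_k = sin(π/k)`,
`R_{2k} = cos(π/(2k))`:
`(1/√(R_k+1)) · [[1/√2, 0, √R_k, e^{iπ/k}/√2], [1/√2, 0, −√R_k·e^{−iπ/k}, e^{−iπ/k}/√2],`
`[√R_k, 0, e^{−iπ/(2k)}·I_k/(i·√2·R_{2k}), −√R_k], [0, √(R_k+1), 0, 0]]`,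
rows and columns indexed by two-bit strings `00,01,10,11` (encoded as `0,1,2,3`). -/
noncomputable def VMat (k : ℕ) : Matrix (Fin 4) (Fin 4) ℂ :=
  (1 / (Real.sqrt (Real.cos (Real.pi / k) + 1) : ℂ)) •
    !![1 / (Real.sqrt 2 : ℂ), 0, (Real.sqrt (Real.cos (Real.pi / k)) : ℂ),
          Complex.exp (Complex.I * ((Real.pi : ℂ) / (k : ℂ))) / (Real.sqrt 2 : ℂ);
        1 / (Real.sqrt 2 : ℂ), 0,
          -((Real.sqrt (Real.cos (Real.pi / k)) : ℂ) *
              Complex.exp (-(Complex.I * ((Real.pi : ℂ) / (k : ℂ))))),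
          Complex.exp (-(Complex.I * ((Real.pi : ℂ) / (k : ℂ)))) / (Real.sqrt 2 : ℂ);
        (Real.sqrt (Real.cos (Real.pi / k)) : ℂ), 0,
          Complex.exp (-(Complex.I * ((Real.pi : ℂ) / (2 * (k : ℂ))))) *
              (Real.sin (Real.pi / k) : ℂ) /
            (Complex.I * (Real.sqrt 2 : ℂ) * (Real.cos (Real.pi / (2 * k)) : ℂ)),
          -(Real.sqrt (Real.cos (Real.pi / k)) : ℂ);
        0, (Real.sqrt (Real.cos (Real.pi / k) + 1) : ℂ), 0, 0]

lemma zkey (t : ℝ) (h : Real.cos (t/2) ≠ 0) :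
    Complex.exp (-(Complex.I * ((t:ℂ)/2))) * (Real.sin t : ℂ) /
      (Complex.I * (Real.sqrt 2 : ℂ) * (Real.cos (t/2) : ℂ)) =
    (Complex.exp (-(Complex.I * (t:ℂ))) - 1) / (Real.sqrt 2 : ℂ) := by
  have hs : Real.sin t = 2 * Real.sin (t/2) * Real.cos (t/2) := by
    rw [← Real.sin_two_mul]; ring_nf
  have hE : Complex.exp (-(Complex.I * ((t:ℂ)/2))) =
      (Real.cos (t/2) : ℂ) - Complex.I * (Real.sin (t/2) : ℂ) := by
    rw [show (-(Complex.I * ((t:ℂ)/2))) = ((-(t/2) : ℝ) : ℂ) * Complex.I by push_cast; ring,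
      Complex.exp_mul_I, ← Complex.ofReal_cos, ← Complex.ofReal_sin, Real.cos_neg, Real.sin_neg]
    push_cast; ring
  have hE2 : Complex.exp (-(Complex.I * (t:ℂ))) =
      Complex.exp (-(Complex.I * ((t:ℂ)/2))) ^ 2 := by
    rw [← Complex.exp_nat_mul]; ring_nf
  have h2 : (Real.sqrt 2 : ℂ) ≠ 0 := Complex.ofReal_ne_zero.mpr (by positivity)
  have hc : (Real.cos (t/2) : ℂ) ≠ 0 := Complex.ofReal_ne_zero.mpr h
  have hpy : (Real.sin (t/2) : ℂ)^2 + (Real.cos (t/2) : ℂ)^2 = 1 := by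
    exact_mod_cast congrArg (Complex.ofReal) (Real.sin_sq_add_cos_sq (t/2))
  have hsC : (Real.sin t : ℂ) = 2 * (Real.sin (t/2):ℂ) * (Real.cos (t/2):ℂ) := by
    exact_mod_cast congrArg Complex.ofReal hs
  rw [hE2, hE, hsC]
  set S : ℂ := (Real.sin (t/2):ℂ) with hSd
  set C : ℂ := (Real.cos (t/2):ℂ) with hCd
  set q : ℂ := (Real.sqrt 2 : ℂ) with hqd
  field_simp
  linear_combination (2*S*C - S^2*Complex.I) * Complex.I_sq + (-Complex.I) * hpy

set_option maxHeartbeats 2000000 in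
lemma aux_mul (A R Q E F c : ℂ) (h2 : A^2 = 2) (hr : R^2 = c) (hq : Q^2 = c + 1)
    (hA : A ≠ 0) (hQ : Q ≠ 0) (hEF : E*F = 1) (hEpF : E + F = 2*c) :
    ((1/Q) • !![1/A, 1/A, R, 0; 0,0,0,Q; R, -(R*E), (E-1)/A, 0; F/A, E/A, -R, 0]) *
      ((1/Q) • !![1/A, 0, R, E/A; 1/A, 0, -(R*F), F/A; R, 0, (F-1)/A, -R; 0, Q, 0, 0]) =
    1 := by
  ext i j
  fin_cases i <;> fin_cases j <;>
    simp [Matrix.mul_apply, Fin.sum_univ_four, Matrix.one_apply] <;>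
    field_simp <;> ring_nf
  · linear_combination (R^2 - Q^2) * h2 + 2 * hr - 2 * hq
  · linear_combination hEpF - R^2*h2 - 2*hr
  · linear_combination (R^2*E*F + R^2 - Q^2)*h2 + (2*R^2 + 1)*hEF - hEpF + 4*hr - 2*hq
  · linear_combination (-R)*hEF
  · linear_combination hEpF - R^2*h2 - 2*hr
  · linear_combination (-R)*hEF
  · linear_combination 2*hEF + (R^2 - Q^2) * h2 + 2 * hr - 2 * hq


set_option maxHeartbeats 2000000 in
/-- For every odd integer `k ≥ 3`, the matrix `V_k` is unitary: `V·V† = V†·V = I`. -/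
theorem VMat_unitary (k : ℕ) (hk : 3 ≤ k) (hko : Odd k) :
    VMat k * (VMat k)ᴴ = 1 ∧ (VMat k)ᴴ * VMat k = 1 := by
  have hkR : (3:ℝ) ≤ (k:ℝ) := by exact_mod_cast hk
  have hk0 : (0:ℝ) < k := by linarith
  have hpi := Real.pi_pos
  have ht0 : 0 < Real.pi / (k:ℝ) := by positivity
  have ht2 : Real.pi / (k:ℝ) < Real.pi/2 := by
    have h3 : Real.pi / (k:ℝ) ≤ Real.pi / 3 :=
      div_le_div_of_nonneg_left hpi.le (by norm_num) hkR
    nlinarith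
  have hcos : 0 < Real.cos (Real.pi / (k:ℝ)) :=
    Real.cos_pos_of_mem_Ioo ⟨by linarith, ht2⟩
  have hcos2 : 0 < Real.cos (Real.pi / (k:ℝ) / 2) :=
    Real.cos_pos_of_mem_Ioo ⟨by linarith, by linarith⟩
  have hz : Complex.exp (-(Complex.I * ((Real.pi : ℂ) / (2 * (k : ℂ))))) *
        (Real.sin (Real.pi / k) : ℂ) /
        (Complex.I * (Real.sqrt 2 : ℂ) * (Real.cos (Real.pi / (2 * k)) : ℂ)) =
      (Complex.exp (-(Complex.I * ((Real.pi : ℂ) / (k : ℂ)))) - 1) / (Real.sqrt 2 : ℂ) := by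
    have h1 : (-(Complex.I * ((Real.pi:ℂ)/(2*(k:ℂ))))) =
        (-(Complex.I * ((((Real.pi/(k:ℝ)):ℝ):ℂ)/2))) := by push_cast; ring
    have h2 : (-(Complex.I * ((Real.pi:ℂ)/(k:ℂ)))) =
        (-(Complex.I * (((Real.pi/(k:ℝ)):ℝ):ℂ))) := by push_cast; ring
    have h3 : Real.pi/(2*(k:ℝ)) = (Real.pi/(k:ℝ))/2 := by ring
    rw [h1, h2, h3]
    exact zkey _ (ne_of_gt hcos2)
  have hce : (starRingEnd ℂ) (Complex.exp (Complex.I * ((Real.pi:ℂ)/(k:ℂ)))) =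
      Complex.exp (-(Complex.I * ((Real.pi:ℂ)/(k:ℂ)))) := by
    rw [← Complex.exp_conj]
    congr 1
    simp [map_div₀, Complex.conj_I]
  have hcf : (starRingEnd ℂ) (Complex.exp (-(Complex.I * ((Real.pi:ℂ)/(k:ℂ))))) =
      Complex.exp (Complex.I * ((Real.pi:ℂ)/(k:ℂ))) := by
    rw [← Complex.exp_conj]
    congr 1
    simp [map_div₀, Complex.conj_I]
  have hEF : Complex.exp (Complex.I * ((Real.pi:ℂ)/(k:ℂ))) *
      Complex.exp (-(Complex.I * ((Real.pi:ℂ)/(k:ℂ)))) = 1 := by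
    rw [← Complex.exp_add]; simp
  have hEpF : Complex.exp (Complex.I * ((Real.pi:ℂ)/(k:ℂ))) +
      Complex.exp (-(Complex.I * ((Real.pi:ℂ)/(k:ℂ)))) =
      2 * (Real.cos (Real.pi/(k:ℝ)) : ℂ) := by
    have e1 : Complex.I * ((Real.pi:ℂ)/(k:ℂ)) = (((Real.pi/(k:ℝ)):ℝ):ℂ) * Complex.I := by
      push_cast; ring
    rw [e1, ← neg_mul, Complex.exp_mul_I, Complex.exp_mul_I, ← Complex.ofReal_neg,
      ← Complex.ofReal_cos, ← Complex.ofReal_sin, ← Complex.ofReal_cos, ← Complex.ofReal_sin,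
      Real.cos_neg, Real.sin_neg]
    push_cast; ring
  have hr : (Real.sqrt (Real.cos (Real.pi/(k:ℝ))) : ℂ)^2 = (Real.cos (Real.pi/(k:ℝ)) : ℂ) := by
    rw [← Complex.ofReal_pow, Real.sq_sqrt hcos.le]
  have hq : (Real.sqrt (Real.cos (Real.pi/(k:ℝ)) + 1) : ℂ)^2 =
      (Real.cos (Real.pi/(k:ℝ)) : ℂ) + 1 := by
    rw [← Complex.ofReal_pow, Real.sq_sqrt (by linarith)]; push_cast; ring
  have h2 : (Real.sqrt 2 : ℂ)^2 = 2 := by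
    rw [← Complex.ofReal_pow, Real.sq_sqrt (by norm_num)]; norm_num
  have hqne : (Real.sqrt (Real.cos (Real.pi/(k:ℝ)) + 1) : ℂ) ≠ 0 :=
    Complex.ofReal_ne_zero.mpr (by positivity)
  have h2ne : (Real.sqrt 2 : ℂ) ≠ 0 := Complex.ofReal_ne_zero.mpr (by positivity)
  -- abbreviations
  set A : ℂ := (Real.sqrt 2 : ℂ) with hAd
  set R : ℂ := (Real.sqrt (Real.cos (Real.pi/(k:ℝ))) : ℂ) with hRd
  set Q : ℂ := (Real.sqrt (Real.cos (Real.pi/(k:ℝ)) + 1) : ℂ) with hQd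
  set E : ℂ := Complex.exp (Complex.I * ((Real.pi:ℂ)/(k:ℂ))) with hEd
  set F : ℂ := Complex.exp (-(Complex.I * ((Real.pi:ℂ)/(k:ℂ)))) with hFd
  have hAc : (starRingEnd ℂ) A = A := by rw [hAd]; exact Complex.conj_ofReal _
  have hRc : (starRingEnd ℂ) R = R := by rw [hRd]; exact Complex.conj_ofReal _
  have hQc : (starRingEnd ℂ) Q = Q := by rw [hQd]; exact Complex.conj_ofReal _
  have hVform : VMat k =
      (1/Q) • !![1/A, 0, R, E/A; 1/A, 0, -(R*F), F/A; R, 0, (F-1)/A, -R; 0, Q, 0, 0] := by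
    rw [VMat]
    simp only [← hAd, ← hRd, ← hQd, ← hEd, ← hFd]
    rw [hz]
  have hVconj : (VMat k)ᴴ =
      (1/Q) • !![1/A, 1/A, R, 0; 0,0,0,Q; R, -(R*E), (E-1)/A, 0; F/A, E/A, -R, 0] := by
    rw [hVform]
    ext i j
    fin_cases i <;> fin_cases j <;>
      simp [Matrix.conjTranspose_apply, map_div₀, hce, hcf, hAc, hRc, hQc,
        Matrix.vecHead, Matrix.vecTail]
  have key : (VMat k)ᴴ * VMat k = 1 := by
    rw [hVconj, hVform]
    exact aux_mul A R Q E F _ h2 hr hq h2ne hqne hEF hEpF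
  exact ⟨mul_eq_one_comm.mpr key, key⟩
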